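/- Let d ≥ 1 and T ≥ 1 be integers and Z > 0 a real number. Let θ_1, …, θ_T ∈ ℝ^d satisfy ‖θ_t‖_∞ ≤ 1 for all t. Define lifted vectors θ̃_t = (θ_{t,1}, …, θ_{t,d}, 0) ∈ ℝ^{d+1}, set η = √(2 log(d+1) / T), and define exponentiated-gradient weights on the (d+1)-dimensional probability simplex by w_{1,i} = 1/(d+1) and w_{t+1,i} = w_{t,i} exp(−η θ̃_{t,i}) / Σ_{j=1}^{d+1} w_{t,j} exp(−η θ̃_{t,j}). Set λ_t = Z·(w_{t,1}, …, w_{t,d}) ∈ ℝ^d. Then λ_t ∈ Λ := {λ ∈ ℝ^d : λ_i ≥ 0 for all i, ‖λ‖_1 ≤ Z} for every t, and Σ_{t=1}^T ⟨θ_t, λ_t⟩ − min_{λ ∈ Λ} Σ_{t=1}^T ⟨θ_t, λ⟩ ≤ Z √(2 T log(d+1)). -/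

import Mathlib

open Finset


lemma eg_mgf_bound (a b : ℝ) (ha : 0 ≤ a) (hb : 0 ≤ b) (hab : a + b = 1)
    (t : ℝ) (ht : 0 ≤ t) :
    a * Real.exp t + b * Real.exp (-t) ≤ Real.exp ((a - b) * t + t ^ 2 / 2) := by
  set f : ℝ → ℝ := fun s => a * Real.exp s + b * Real.exp (-s) with hf
  have hfpos : ∀ s, 0 < f s := by
    intro s
    have h1 := Real.exp_pos s
    have h2 := Real.exp_pos (-s)
    have hab' : 0 < a ∨ 0 < b := by
      by_contra hcon
      push_neg at hcon
      nlinarith [hcon.1, hcon.2]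
    simp only [hf]
    rcases hab' with h | h
    · have := mul_pos h h1
      nlinarith [mul_nonneg hb h2.le]
    · have := mul_pos h h2
      nlinarith [mul_nonneg ha h1.le]
  set g : ℝ → ℝ := fun s => a * Real.exp s - b * Real.exp (-s) with hg
  have hfd : ∀ s, HasDerivAt f (g s) s := by
    intro s
    have h1 : HasDerivAt (fun s : ℝ => a * Real.exp s) (a * Real.exp s) s :=
      (Real.hasDerivAt_exp s).const_mul a
    have h2 : HasDerivAt (fun s : ℝ => b * Real.exp (-s)) (b * (Real.exp (-s) * (-1))) s := by
      have := ((Real.hasDerivAt_exp (-s)).comp s (hasDerivAt_neg s))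
      exact this.const_mul b
    have := h1.add h2
    exact this.congr_deriv (by simp only [hg]; ring)
  set q : ℝ → ℝ := fun s => g s / f s - (a - b) - s with hq
  have hqd : ∀ s, HasDerivAt q (-(g s / f s) ^ 2) s := by
    intro s
    have hgd : ∀ s, HasDerivAt g (f s) s := by
      intro s
      have h1 : HasDerivAt (fun s : ℝ => a * Real.exp s) (a * Real.exp s) s :=
        (Real.hasDerivAt_exp s).const_mul a
      have h2 : HasDerivAt (fun s : ℝ => b * Real.exp (-s)) (b * (Real.exp (-s) * (-1))) s := by
        have := ((Real.hasDerivAt_exp (-s)).comp s (hasDerivAt_neg s))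
        exact this.const_mul b
      have := h1.sub h2
      exact this.congr_deriv (by simp only [hf]; ring)
    have hdiv : HasDerivAt (fun s => g s / f s)
        ((f s * f s - g s * g s) / f s ^ 2) s := (hgd s).div (hfd s) (hfpos s).ne'
    have h1 : HasDerivAt (fun s : ℝ => g s / f s - (a - b) - s)
        ((f s * f s - g s * g s) / f s ^ 2 - 1) s := by
      exact (hdiv.sub_const (a - b)).sub (hasDerivAt_id s)
    have heq : (f s * f s - g s * g s) / f s ^ 2 - 1 = -(g s / f s) ^ 2 := by
      have := (hfpos s).ne'
      field_simp
      ring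
    rw [heq] at h1
    exact h1
  have hq0 : q 0 = 0 := by
    simp [hq, hg, hf, hab]
  have hqle : ∀ s, 0 ≤ s → q s ≤ 0 := by
    intro s hs
    have hanti : AntitoneOn q (Set.Ici (0:ℝ)) := by
      apply antitoneOn_of_deriv_nonpos (convex_Ici 0)
      · exact fun x _ => ((hqd x).differentiableAt).continuousAt.continuousWithinAt
      · exact fun x _ => ((hqd x).differentiableAt).differentiableWithinAt
      · intro x _
        rw [(hqd x).deriv]
        simp [neg_nonpos]
        positivity
    have := hanti (Set.mem_Ici.2 le_rfl) (Set.mem_Ici.2 hs) hs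
    simpa [hq0] using this
  set φ : ℝ → ℝ := fun s => Real.log (f s) - ((a - b) * s + s ^ 2 / 2) with hφ
  have hφd : ∀ s, HasDerivAt φ (q s) s := by
    intro s
    have h1 : HasDerivAt (fun s => Real.log (f s)) (g s / f s) s :=
      (hfd s).log (hfpos s).ne'
    have h2 : HasDerivAt (fun s : ℝ => (a - b) * s + s ^ 2 / 2) ((a - b) + s) s := by
      have ha1 : HasDerivAt (fun s : ℝ => (a - b) * s) (a - b) s := by
        simpa using (hasDerivAt_id s).const_mul (a - b)
      have ha2 : HasDerivAt (fun s : ℝ => s ^ 2 / 2) (s) s := by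
        have := (hasDerivAt_pow 2 s).div_const 2
        simpa using this
      exact ha1.add ha2
    have := h1.sub h2
    exact this.congr_deriv (by simp only [hq]; ring)
  have hφanti : AntitoneOn φ (Set.Ici (0:ℝ)) := by
    apply antitoneOn_of_deriv_nonpos (convex_Ici 0)
    · exact fun x _ => ((hφd x).differentiableAt).continuousAt.continuousWithinAt
    · exact fun x _ => ((hφd x).differentiableAt).differentiableWithinAt
    · intro x hx
      rw [(hφd x).deriv]
      exact hqle x (le_of_lt (by simpa using hx))
  have hφ0 : φ 0 = 0 := by
    simp [hφ, hf, hab]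
  have hφt : φ t ≤ 0 := by
    have := hφanti (Set.mem_Ici.2 le_rfl) (Set.mem_Ici.2 ht) ht
    simpa [hφ0] using this
  have : Real.log (f t) ≤ (a - b) * t + t ^ 2 / 2 := by
    simpa [hφ, sub_nonpos] using hφt
  calc f t ≤ Real.exp (Real.log (f t)) := by rw [Real.exp_log (hfpos t)]
    _ ≤ Real.exp ((a - b) * t + t ^ 2 / 2) := Real.exp_le_exp.2 this

lemma eg_hoeffding_sum {n : ℕ} [NeZero n] (p x : Fin n → ℝ) (hp : ∀ i, 0 ≤ p i)
    (hp1 : ∑ i, p i = 1) (hx : ∀ i, |x i| ≤ 1) (t : ℝ) (ht : 0 ≤ t) :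
    ∑ i, p i * Real.exp (t * x i) ≤ Real.exp (t * (∑ i, p i * x i) + t ^ 2 / 2) := by
  set m : ℝ := ∑ i, p i * x i with hm
  have hm1 : |m| ≤ 1 := by
    calc |m| ≤ ∑ i, |p i * x i| := Finset.abs_sum_le_sum_abs _ _
      _ ≤ ∑ i, p i := by
          apply Finset.sum_le_sum
          intro i _
          rw [abs_mul, abs_of_nonneg (hp i)]
          calc p i * |x i| ≤ p i * 1 := mul_le_mul_of_nonneg_left (hx i) (hp i)
            _ = p i := mul_one _
      _ = 1 := hp1
  have step1 : ∀ i, Real.exp (t * x i) ≤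
      ((1 + x i) / 2) * Real.exp t + ((1 - x i) / 2) * Real.exp (-t) := by
    intro i
    have h1 : |x i| ≤ 1 := hx i
    have hx1 : -1 ≤ x i := (abs_le.1 h1).1
    have hx2 : x i ≤ 1 := (abs_le.1 h1).2
    have := convexOn_exp.2 (Set.mem_univ t) (Set.mem_univ (-t))
      (by linarith : (0:ℝ) ≤ (1 + x i) / 2) (by linarith : (0:ℝ) ≤ (1 - x i) / 2)
      (by ring)
    have harg : ((1 + x i) / 2) • t + ((1 - x i) / 2) • (-t) = t * x i := by
      simp only [smul_eq_mul]; ring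
    rw [harg] at this
    simpa [smul_eq_mul] using this
  calc ∑ i, p i * Real.exp (t * x i)
      ≤ ∑ i, p i * (((1 + x i) / 2) * Real.exp t + ((1 - x i) / 2) * Real.exp (-t)) := by
        apply Finset.sum_le_sum
        exact fun i _ => mul_le_mul_of_nonneg_left (step1 i) (hp i)
    _ = ((1 + m) / 2) * Real.exp t + ((1 - m) / 2) * Real.exp (-t) := by
        have h1 : ∑ i, p i * (((1 + x i) / 2) * Real.exp t + ((1 - x i) / 2) * Real.exp (-t))
            = (∑ i, (p i + p i * x i)) * (Real.exp t / 2)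
              + (∑ i, (p i - p i * x i)) * (Real.exp (-t) / 2) := by
          rw [Finset.sum_mul, Finset.sum_mul, ← Finset.sum_add_distrib]
          exact Finset.sum_congr rfl fun i _ => by ring
        rw [h1, Finset.sum_add_distrib, Finset.sum_sub_distrib, hp1, ← hm]
        ring
    _ ≤ Real.exp (((1 + m) / 2 - (1 - m) / 2) * t + t ^ 2 / 2) := by
        apply eg_mgf_bound _ _ (by linarith [abs_le.1 hm1] : (0:ℝ) ≤ (1 + m) / 2)
          (by linarith [abs_le.1 hm1] : (0:ℝ) ≤ (1 - m) / 2) (by ring) t ht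
    _ = Real.exp (t * m + t ^ 2 / 2) := by ring_nf


/-- Exponentiated-gradient (online mirror descent) regret bound over the nonnegative
ℓ1-ball of radius `Z`, via lifting to the `(d+1)`-dimensional probability simplex. -/
theorem squareCBwK_exp_gradient_regret
    (d T : ℕ) (hd : 1 ≤ d) (hT : 1 ≤ T) (Z : ℝ) (hZ : 0 < Z)
    (θ : Fin T → Fin d → ℝ) (hθ : ∀ t i, |θ t i| ≤ 1)
    (θlift : Fin T → Fin (d + 1) → ℝ) (hθlift : ∀ t, θlift t = Fin.snoc (θ t) 0)
    (η : ℝ) (hη : η = Real.sqrt (2 * Real.log (d + 1) / T))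
    (w : ℕ → Fin (d + 1) → ℝ)
    (hw1 : ∀ i, w 1 i = 1 / (d + 1))
    (hwrec : ∀ t : Fin T, ∀ i, w (t.val + 2) i =
      w (t.val + 1) i * Real.exp (-η * θlift t i) /
        ∑ j, w (t.val + 1) j * Real.exp (-η * θlift t j))
    (lam : Fin T → Fin d → ℝ)
    (hlam : ∀ t i, lam t i = Z * w (t.val + 1) i.castSucc) :
    (∀ t : Fin T, (∀ i, 0 ≤ lam t i) ∧ (∑ i, |lam t i|) ≤ Z) ∧
    (∀ μ : Fin d → ℝ, (∀ i, 0 ≤ μ i) → (∑ i, |μ i|) ≤ Z →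
      (∑ t, ∑ i, θ t i * lam t i) - (∑ t, ∑ i, θ t i * μ i) ≤
        Z * Real.sqrt (2 * T * Real.log (d + 1))) := by
  have hdc : (1:ℝ) < (d:ℝ) + 1 := by
    have : (1:ℝ) ≤ (d:ℝ) := by exact_mod_cast hd
    linarith
  have hlogpos : 0 < Real.log ((d:ℝ) + 1) := Real.log_pos hdc
  have hTpos : (0:ℝ) < (T:ℝ) := by exact_mod_cast hT
  have hηpos : 0 < η := by
    rw [hη]; apply Real.sqrt_pos.2; positivity
  have hηsq : η ^ 2 = 2 * Real.log ((d:ℝ) + 1) / T := by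
    rw [hη, Real.sq_sqrt (by positivity)]
  have hθliftb : ∀ t i, |θlift t i| ≤ 1 := by
    intro t i
    rw [hθlift]
    induction i using Fin.lastCases with
    | last => simp
    | cast j => simpa using hθ t j
  set θL : ℕ → Fin (d+1) → ℝ := fun s i => if h : s < T then θlift ⟨s, h⟩ i else 0 with hθLdef
  set L : ℕ → Fin (d+1) → ℝ := fun n i => ∑ s ∈ Finset.range n, θL s i with hLdef
  set S : ℕ → ℝ := fun n => ∑ j, Real.exp (-η * L n j) with hSdef
  have hSpos : ∀ n, 0 < S n :=
    fun n => Finset.sum_pos (fun j _ => Real.exp_pos _) Finset.univ_nonempty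
  have hL0 : ∀ i, L 0 i = 0 := by intro i; simp [hLdef]
  have hS0 : S 0 = (d:ℝ) + 1 := by
    simp [hSdef, hL0, Finset.card_univ]
  have hLsucc : ∀ n i, L (n+1) i = L n i + θL n i := by
    intro n i; simp only [hLdef]; exact Finset.sum_range_succ _ n
  have hwf : ∀ n, n ≤ T → ∀ i, w (n+1) i = Real.exp (-η * L n i) / S n := by
    intro n
    induction n with
    | zero =>
      intro _ i
      rw [hw1, hS0, hL0]
      simp
    | succ n ih =>
      intro hn i
      have hn' : n < T := hn
      have hnT : n ≤ T := hn'.le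
      have hθLn : ∀ j, θL n j = θlift ⟨n, hn'⟩ j := fun j => dif_pos hn'
      have hexp : ∀ j : Fin (d+1), Real.exp (-η * L (n+1) j)
          = Real.exp (-η * L n j) * Real.exp (-η * θlift ⟨n, hn'⟩ j) := by
        intro j
        rw [← Real.exp_add, ← hθLn j]
        congr 1
        rw [hLsucc n j]; ring
      have hden : (∑ j, w (n+1) j * Real.exp (-η * θlift ⟨n, hn'⟩ j)) = S (n+1) / S n := by
        have hS1 : S (n+1) = ∑ j, Real.exp (-η * L (n+1) j) := rfl
        rw [hS1, Finset.sum_div]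
        apply Finset.sum_congr rfl
        intro j _
        rw [ih hnT j, hexp j]
        field_simp
      have hrec := hwrec ⟨n, hn'⟩ i
      simp only at hrec
      rw [hrec, hden, ih hnT i, hexp i]
      have h1 := (hSpos n).ne'
      have h2 := (hSpos (n+1)).ne'
      field_simp
  have hwpos : ∀ n, n ≤ T → ∀ i, 0 < w (n+1) i := by
    intro n hn i
    rw [hwf n hn i]
    exact div_pos (Real.exp_pos _) (hSpos n)
  have hwsum : ∀ n, n ≤ T → ∑ i, w (n+1) i = 1 := by
    intro n hn
    rw [Finset.sum_congr rfl (fun i _ => hwf n hn i), ← Finset.sum_div]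
    exact div_self (hSpos n).ne'
  constructor
  · intro t
    have ht' : t.val ≤ T := t.isLt.le
    refine ⟨fun i => ?_, ?_⟩
    · rw [hlam]; exact mul_nonneg hZ.le (hwpos _ ht' _).le
    · have habs : ∑ i, |lam t i| = Z * ∑ i : Fin d, w (t.val+1) i.castSucc := by
        rw [Finset.mul_sum]
        apply Finset.sum_congr rfl
        intro i _
        rw [hlam, abs_of_nonneg (mul_nonneg hZ.le (hwpos _ ht' _).le)]
      rw [habs]
      have hle : ∑ i : Fin d, w (t.val+1) i.castSucc ≤ 1 := by
        have hs := hwsum t.val ht'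
        rw [Fin.sum_univ_castSucc] at hs
        have hlast := (hwpos t.val ht' (Fin.last d)).le
        linarith
      calc Z * ∑ i : Fin d, w (t.val+1) i.castSucc ≤ Z * 1 :=
            mul_le_mul_of_nonneg_left hle hZ.le
        _ = Z := mul_one Z
  · -- regret bound
    set ip : ℕ → ℝ := fun n => ∑ j, w (n+1) j * θL n j with hipdef
    have hstep : ∀ n, n < T → S (n+1) ≤ S n * Real.exp (-η * ip n + η^2/2) := by
      intro n hn
      have hθLn : ∀ j, θL n j = θlift ⟨n, hn⟩ j := fun j => dif_pos hn
      have hxb : ∀ j : Fin (d+1), |(-θL n j)| ≤ 1 := by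
        intro j
        rw [abs_neg, hθLn j]
        exact hθliftb _ j
      have hh := eg_hoeffding_sum (w (n+1)) (fun j => -θL n j)
        (fun j => (hwpos n hn.le j).le) (hwsum n hn.le) hxb η hηpos.le
      have hS1 : S (n+1) = S n * ∑ j, w (n+1) j * Real.exp (η * (-θL n j)) := by
        have : S (n+1) = ∑ j, Real.exp (-η * L (n+1) j) := rfl
        rw [this, Finset.mul_sum]
        apply Finset.sum_congr rfl
        intro j _
        rw [hwf n hn.le j,
          show -η * L (n+1) j = -η * L n j + η * (-θL n j) by rw [hLsucc n j]; ring,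
          Real.exp_add]
        field_simp [(hSpos n).ne']
      have he : η * (∑ j, w (n+1) j * -θL n j) + η^2/2 = -η * ip n + η^2/2 := by
        have h1 : (∑ j, w (n+1) j * -θL n j) = -ip n := by
          simp [hipdef, mul_neg, ← Finset.sum_neg_distrib]
        rw [h1]; ring
      rw [hS1]
      calc S n * ∑ j, w (n+1) j * Real.exp (η * (-θL n j))
          ≤ S n * Real.exp (η * (∑ j, w (n+1) j * -θL n j) + η^2/2) :=
            mul_le_mul_of_nonneg_left hh (hSpos n).le
        _ = S n * Real.exp (-η * ip n + η^2/2) := by rw [he]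
    have htel : ∀ N, N ≤ T →
        S N ≤ S 0 * Real.exp (-η * (∑ n ∈ Finset.range N, ip n) + (N:ℝ) * (η^2/2)) := by
      intro N
      induction N with
      | zero => intro _; simp
      | succ N ih =>
        intro hN
        have hN' : N < T := hN
        push_cast
        calc S (N+1) ≤ S N * Real.exp (-η * ip N + η^2/2) := hstep N hN'
          _ ≤ (S 0 * Real.exp (-η * (∑ n ∈ Finset.range N, ip n) + N * (η^2/2)))
              * Real.exp (-η * ip N + η^2/2) :=
            mul_le_mul_of_nonneg_right (ih hN'.le) (Real.exp_pos _).le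
          _ = S 0 * Real.exp (-η * (∑ n ∈ Finset.range (N+1), ip n) + ((N:ℝ)+1) * (η^2/2)) := by
            rw [mul_assoc, ← Real.exp_add, Finset.sum_range_succ]
            ring_nf
    set P : ℝ := ∑ n ∈ Finset.range T, ip n with hPdef
    set B : ℝ := Real.sqrt (2 * T * Real.log ((d:ℝ)+1)) with hBdef
    have hkey : ∀ j : Fin (d+1), P - L T j ≤ B := by
      intro j
      have h1 : Real.exp (-η * L T j) ≤ S T :=
        Finset.single_le_sum (f := fun j => Real.exp (-η * L T j))
          (fun j _ => (Real.exp_pos _).le) (Finset.mem_univ j)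
      have h3 : Real.exp (-η * L T j) ≤ ((d:ℝ)+1) * Real.exp (-η * P + T * (η^2/2)) := by
        rw [← hS0]
        exact h1.trans (htel T le_rfl)
      have h4 : -η * L T j ≤ Real.log ((d:ℝ)+1) + (-η * P + T * (η^2/2)) := by
        have hlog := Real.log_le_log (Real.exp_pos _) h3
        rwa [Real.log_exp, Real.log_mul (by positivity) (Real.exp_pos _).ne',
          Real.log_exp] at hlog
      have hT2 : (T:ℝ) * (η^2/2) = Real.log ((d:ℝ)+1) := by
        rw [hηsq]; field_simp
      have h5 : η * (P - L T j) ≤ 2 * Real.log ((d:ℝ)+1) := by nlinarith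
      have hηB : η * B = 2 * Real.log ((d:ℝ)+1) := by
        rw [hη, hBdef, ← Real.sqrt_mul (by positivity),
          show (2 * Real.log ((d:ℝ)+1) / ↑T) * (2 * ↑T * Real.log ((d:ℝ)+1))
            = (2 * Real.log ((d:ℝ)+1))^2 by field_simp]
        exact Real.sqrt_sq (by positivity)
      have := h5.trans_eq hηB.symm
      exact le_of_mul_le_mul_left this hηpos
    intro μ hμ0 hμ1
    have hθLt : ∀ (t : Fin T) (j : Fin (d+1)), θL t.val j = θlift t j := by
      intro t j
      simp only [hθLdef]
      rw [dif_pos t.isLt]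
    have hlhs : (∑ t : Fin T, ∑ i, θ t i * lam t i) = Z * P := by
      rw [hPdef, ← Fin.sum_univ_eq_sum_range (fun n => ip n) T, Finset.mul_sum]
      apply Finset.sum_congr rfl
      intro t _
      have hcs : ∀ i : Fin d, θL t.val i.castSucc = θ t i := by
        intro i
        rw [hθLt t i.castSucc, hθlift]
        simp
      have hlast : θL t.val (Fin.last d) = 0 := by
        rw [hθLt t (Fin.last d), hθlift]
        simp
      calc ∑ i, θ t i * lam t i = ∑ i : Fin d, Z * (w (t.val+1) i.castSucc * θL t.val i.castSucc) := by
            apply Finset.sum_congr rfl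
            intro i _
            rw [hlam, hcs i]; ring
        _ = Z * ip t.val := by
            rw [← Finset.mul_sum]
            congr 1
            simp only [hipdef]
            rw [Fin.sum_univ_castSucc, hlast, mul_zero, add_zero]
    have hG : ∀ i : Fin d, L T i.castSucc = ∑ t : Fin T, θ t i := by
      intro i
      simp only [hLdef]
      rw [← Fin.sum_univ_eq_sum_range (fun n => θL n i.castSucc) T]
      apply Finset.sum_congr rfl
      intro t _
      rw [hθLt t i.castSucc, hθlift]
      simp
    have hrhs : (∑ t : Fin T, ∑ i, θ t i * μ i) = ∑ i : Fin d, μ i * L T i.castSucc := by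
      rw [Finset.sum_comm]
      apply Finset.sum_congr rfl
      intro i _
      rw [hG i, Finset.mul_sum]
      exact Finset.sum_congr rfl fun t _ => mul_comm _ _
    rw [hlhs, hrhs]
    have hLlast : L T (Fin.last d) = 0 := by
      simp only [hLdef]
      apply Finset.sum_eq_zero
      intro s hs
      have hs' : s < T := Finset.mem_range.1 hs
      simp only [hθLdef]
      rw [dif_pos hs', hθlift]
      simp
    have hPB : P ≤ B := by
      have := hkey (Fin.last d)
      rw [hLlast] at this
      linarith
    set c : ℝ := ∑ i, μ i with hcdef
    have hc0 : 0 ≤ c := Finset.sum_nonneg fun i _ => hμ0 i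
    have hcZ : c ≤ Z := by
      rw [hcdef]
      calc ∑ i, μ i = ∑ i, |μ i| :=
            Finset.sum_congr rfl fun i _ => (abs_of_nonneg (hμ0 i)).symm
        _ ≤ Z := hμ1
    have hsplit : Z * P - ∑ i, μ i * L T i.castSucc
        = (∑ i, μ i * (P - L T i.castSucc)) + (Z - c) * P := by
      have h1 : ∑ i, μ i * (P - L T i.castSucc)
          = c * P - ∑ i, μ i * L T i.castSucc := by
        rw [Finset.sum_congr rfl (fun i _ => mul_sub (μ i) P (L T i.castSucc)),
          Finset.sum_sub_distrib, ← Finset.sum_mul, ← hcdef]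
      rw [h1]; ring
    rw [hsplit]
    calc (∑ i, μ i * (P - L T i.castSucc)) + (Z - c) * P
        ≤ (∑ i, μ i * B) + (Z - c) * B := by
          apply add_le_add
          · exact Finset.sum_le_sum fun i _ =>
              mul_le_mul_of_nonneg_left (hkey i.castSucc) (hμ0 i)
          · exact mul_le_mul_of_nonneg_left hPB (by linarith)
      _ = Z * B := by rw [← Finset.sum_mul, ← hcdef]; ring
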